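/- Let q be a prime power and let u, v ∈ F_{q^3} be nonzero with N_{q^3/q}(−v/u) ≠ 1, where N_{q^3/q}(x) = x^{q^2+q+1} is the norm. Then for every β ∈ F_{q^3} satisfying Tr_{q^3/q}(u^{q^2} v^q β) = u^{q^2+q+1} + v^{q^2+q+1}, the equation u·x^{q^2−1} + v·x^{q−1} + β = 0 has no solution x ∈ F_{q^3} with x ≠ 0. -/

import Mathlib

private lemma stmt8_det {E : Type*} [Field E]
    (u v β x u1 u2 v1 v2 b1 b2 x1 x2 : E)
    (e1 : u * x2 + v * x1 + β * x = 0)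
    (e2 : u1 * x + v1 * x2 + b1 * x1 = 0)
    (e3 : u2 * x1 + v2 * x + b2 * x2 = 0)
    (hT : u2 * v1 * β + u * v2 * b1 + u1 * v * b2 = u * u1 * u2 + v * v1 * v2) :
    β * b1 * b2 * x = 0 := by
  linear_combination (b1 * b2 - v1 * u2) * e1 + (u * u2 - v * b2) * e2 +
    (v * v1 - u * b1) * e3 + x * hT

/-- for nonzero `u, v ∈ F_{q^3}` with `N_{q^3/q}(−v/u) ≠ 1` and every `β`
with `Tr_{q^3/q}(u^{q^2} v^q β) = u^{q^2+q+1} + v^{q^2+q+1}`, the equation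
`u x^{q^2−1} + v x^{q−1} + β = 0` has no nonzero solution. -/
theorem stmt_8 (q : ℕ) (hq : ∃ p k : ℕ, p.Prime ∧ 0 < k ∧ q = p ^ k)
    (E : Type*) [Field E] [Fintype E] (hE : Fintype.card E = q ^ 3)
    (u v : E) (hu : u ≠ 0) (hv : v ≠ 0)
    (hN : (-v / u) ^ (q ^ 2 + q + 1) ≠ 1)
    (β : E)
    (hβ : ∑ j ∈ Finset.range 3, (u ^ q ^ 2 * v ^ q * β) ^ q ^ j
        = u ^ (q ^ 2 + q + 1) + v ^ (q ^ 2 + q + 1)) :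
    ∀ x : E, x ≠ 0 → u * x ^ (q ^ 2 - 1) + v * x ^ (q - 1) + β ≠ 0 := by
  obtain ⟨p, k, hp, hk, hqpk⟩ := hq
  haveI : Fact p.Prime := ⟨hp⟩
  -- the characteristic of E is p
  have hcharP : CharP E p := by
    have hr := ringChar.charP E
    have hrp : (ringChar E).Prime := CharP.char_is_prime E (ringChar E)
    obtain ⟨n, -, hcard⟩ := FiniteField.card E (ringChar E)
    have hpr : p = ringChar E := by
      have h1 : p ∣ (ringChar E) ^ (n : ℕ) := by
        rw [← hcard, hE, hqpk, ← pow_mul]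
        exact dvd_pow_self p (by omega)
      exact ((Nat.prime_dvd_prime_iff_eq hp hrp).mp (hp.dvd_of_dvd_pow h1))
    rw [hpr]; exact hr
  have hq0 : q ≠ 0 := by rw [hqpk]; exact (pow_pos hp.pos k).ne'
  have hq1 : 1 ≤ q := Nat.one_le_iff_ne_zero.mpr hq0
  have hfrob : ∀ a b : E, (a + b) ^ q = a ^ q + b ^ q := by
    intro a b; rw [hqpk]; exact add_pow_char_pow a b p k
  have hcube : ∀ a : E, ((a ^ q) ^ q) ^ q = a := by
    intro a
    rw [← pow_mul, ← pow_mul, show q * (q * q) = q ^ 3 by ring, ← hE]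
    exact FiniteField.pow_card a
  have hsq : ∀ a : E, a ^ q ^ 2 = (a ^ q) ^ q := by
    intro a; rw [← pow_mul, pow_two]
  intro x hx h
  -- multiply the equation by x
  have e1 : u * ((x ^ q) ^ q) + v * x ^ q + β * x = 0 := by
    have h' : (u * x ^ (q ^ 2 - 1) + v * x ^ (q - 1) + β) * x = 0 := by rw [h]; ring
    have h2 : x ^ (q ^ 2 - 1) * x = (x ^ q) ^ q := by
      rw [← pow_succ, Nat.sub_add_cancel (by nlinarith), hsq]
    have h3 : x ^ (q - 1) * x = x ^ q := by
      rw [← pow_succ, Nat.sub_add_cancel hq1]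
    calc u * ((x ^ q) ^ q) + v * x ^ q + β * x
        = u * (x ^ (q ^ 2 - 1) * x) + v * (x ^ (q - 1) * x) + β * x := by rw [h2, h3]
      _ = (u * x ^ (q ^ 2 - 1) + v * x ^ (q - 1) + β) * x := by ring
      _ = 0 := h'
  -- apply the q-power Frobenius twice
  have e2 : u ^ q * x + v ^ q * ((x ^ q) ^ q) + β ^ q * x ^ q = 0 := by
    have h2 := congrArg (· ^ q) e1
    simp only [zero_pow hq0] at h2
    rw [hfrob, hfrob, mul_pow, mul_pow, mul_pow, hcube x] at h2
    exact h2
  have e3 : (u ^ q) ^ q * x ^ q + (v ^ q) ^ q * x + (β ^ q) ^ q * ((x ^ q) ^ q) = 0 := by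
    have h2 := congrArg (· ^ q) e2
    simp only [zero_pow hq0] at h2
    rw [hfrob, hfrob, mul_pow, mul_pow, mul_pow, hcube x] at h2
    exact h2
  -- rewrite the trace hypothesis
  have hT : (u ^ q) ^ q * v ^ q * β + u * (v ^ q) ^ q * β ^ q
      + u ^ q * v * ((β ^ q) ^ q)
      = u * u ^ q * ((u ^ q) ^ q) + v * v ^ q * ((v ^ q) ^ q) := by
    have hw : ∀ w : E, ∑ j ∈ Finset.range 3, w ^ q ^ j = w + w ^ q + (w ^ q) ^ q := by
      intro w
      rw [Finset.sum_range_succ, Finset.sum_range_succ, Finset.sum_range_one]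
      simp [hsq]
    rw [hw] at hβ
    have hw1 : (u ^ q ^ 2 * v ^ q * β) ^ q = u * (v ^ q) ^ q * β ^ q := by
      rw [hsq, mul_pow, mul_pow, hcube u]
    have hw2 : ((u ^ q ^ 2 * v ^ q * β) ^ q) ^ q = u ^ q * v * ((β ^ q) ^ q) := by
      rw [hw1, mul_pow, mul_pow, hcube v]
    rw [hw2, hw1, hsq u] at hβ
    have hNu : u ^ (q ^ 2 + q + 1) = u * u ^ q * ((u ^ q) ^ q) := by
      rw [pow_add, pow_add, pow_one, hsq]; ring
    have hNv : v ^ (q ^ 2 + q + 1) = v * v ^ q * ((v ^ q) ^ q) := by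
      rw [pow_add, pow_add, pow_one, hsq]; ring
    rw [hNu, hNv] at hβ
    linear_combination hβ
  -- deduce β = 0
  have hb0 : β = 0 := by
    have key := stmt8_det u v β x (u ^ q) ((u ^ q) ^ q) (v ^ q) ((v ^ q) ^ q)
      (β ^ q) ((β ^ q) ^ q) (x ^ q) ((x ^ q) ^ q) e1 e2 e3 hT
    rcases mul_eq_zero.mp key with h' | hx0
    · rcases mul_eq_zero.mp h' with h'' | hb2
      · rcases mul_eq_zero.mp h'' with hb | hb1
        · exact hb
        · exact pow_eq_zero_iff hq0 |>.mp hb1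
      · exact pow_eq_zero_iff hq0 |>.mp (pow_eq_zero_iff hq0 |>.mp hb2)
    · exact absurd hx0 hx
  -- now the β = 0 case contradicts the norm hypothesis
  subst hb0
  set c : E := -v / u with hc
  have hx1 : x ^ q ≠ 0 := pow_ne_zero q hx
  have hx2 : (x ^ q) ^ q ≠ 0 := pow_ne_zero q hx1
  have r1 : (x ^ q) ^ q = c * x ^ q := by
    rw [hc, div_mul_eq_mul_div, eq_div_iff hu]
    linear_combination e1
  have r2 : x = c ^ q * ((x ^ q) ^ q) := by
    have := congrArg (· ^ q) r1
    simp only [mul_pow] at this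
    rw [hcube x] at this
    exact this
  have r3 : x ^ q = (c ^ q) ^ q * x := by
    have := congrArg (· ^ q) r2
    simp only [mul_pow] at this
    rw [hcube x] at this
    exact this
  have hprod : c * c ^ q * ((c ^ q) ^ q) = 1 := by
    have hm : (x ^ q) ^ q * x * x ^ q
        = (c * c ^ q * ((c ^ q) ^ q)) * ((x ^ q) ^ q * x * x ^ q) := by
      calc (x ^ q) ^ q * x * x ^ q
          = (c * x ^ q) * (c ^ q * ((x ^ q) ^ q)) * ((c ^ q) ^ q * x) := by
            rw [← r1, ← r2, ← r3]
        _ = (c * c ^ q * ((c ^ q) ^ q)) * ((x ^ q) ^ q * x * x ^ q) := by ring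
    have hne : (x ^ q) ^ q * x * x ^ q ≠ 0 := by
      exact mul_ne_zero (mul_ne_zero hx2 hx) hx1
    have h1 : (c * c ^ q * ((c ^ q) ^ q)) * ((x ^ q) ^ q * x * x ^ q)
        = 1 * ((x ^ q) ^ q * x * x ^ q) := by rw [one_mul]; exact hm.symm
    exact mul_right_cancel₀ hne h1
  apply hN
  rw [pow_add, pow_add, pow_one, hsq]
  linear_combination hprod
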